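/- If r_j > 0 for some j (aperiodicity) and θ ≥ 1 is such that Q_n(θ) > 0 for all n, then the sequence (|Q_n(θ)/Q_n(−θ)|)_{n≥0} is monotone decreasing with all terms ≤ 1, and its limit is strictly less than 1. -/

import Mathlib

open Finset Filter

theorem stmt19 (p q r : ℕ → ℝ) (Q : ℕ → ℝ → ℝ)
    (hp : ∀ j, 0 < p j) (hq : ∀ j, 0 < q (j + 1)) (hr : ∀ j, 0 ≤ r j)
    (hq0 : q 0 = 0) (hs : ∀ j, p j + q j + r j = 1)
    (hQ0 : ∀ x : ℝ, Q 0 x = 1) (hQ1 : ∀ x : ℝ, p 0 * Q 1 x = x - r 0)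
    (hQrec : ∀ n : ℕ, ∀ x : ℝ, x * Q (n + 1) x =
      q (n + 1) * Q n x + r (n + 1) * Q (n + 1) x + p (n + 1) * Q (n + 2) x)
    (haper : ∃ j, 0 < r j) (θ : ℝ) (hθ : 1 ≤ θ) (hQθ : ∀ n, 0 < Q n θ) :
    Antitone (fun n : ℕ => |Q n θ / Q n (-θ)|) ∧
      (∀ n : ℕ, |Q n θ / Q n (-θ)| ≤ 1) ∧
      ∃ l : ℝ, Tendsto (fun n : ℕ => |Q n θ / Q n (-θ)|) atTop (nhds l) ∧ l < 1 := by
  set a : ℕ → ℝ := fun n => (-1) ^ n * Q n (-θ) with ha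
  have hrecθ : ∀ n, p (n+1) * Q (n+2) θ = (θ - r (n+1)) * Q (n+1) θ - q (n+1) * Q n θ := by
    intro n; have := hQrec n θ; linarith
  have hreca : ∀ n, p (n+1) * a (n+2) = (θ + r (n+1)) * a (n+1) - q (n+1) * a n := by
    intro n
    have h := hQrec n (-θ)
    have h2 : p (n+1) * Q (n+2) (-θ) = (-θ - r (n+1)) * Q (n+1) (-θ) - q (n+1) * Q n (-θ) := by
      linarith
    show p (n+1) * ((-1)^(n+2) * Q (n+2) (-θ)) =
      (θ + r (n+1)) * ((-1)^(n+1) * Q (n+1) (-θ)) - q (n+1) * ((-1)^n * Q n (-θ))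
    have e2 : ((-1:ℝ))^(n+2) = (-1)^n := by ring
    have e1 : ((-1:ℝ))^(n+1) = -((-1:ℝ))^n := by ring
    rw [e2, e1]
    linear_combination ((-1:ℝ)^n) * h2
  have ha0 : a 0 = 1 := by simp [ha, hQ0]
  have ha1 : p 0 * a 1 = θ + r 0 := by
    have := hQ1 (-θ)
    show p 0 * ((-1)^1 * Q 1 (-θ)) = θ + r 0
    simp only [pow_one]
    linarith
  have key : ∀ n, Q n θ ≤ a n ∧ a n * Q (n+1) θ ≤ a (n+1) * Q n θ := by
    intro n
    induction n with
    | zero =>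
      constructor
      · rw [ha0, hQ0]
      · rw [ha0, hQ0, one_mul, mul_one]
        have h1 := hQ1 θ
        have := hr 0
        show Q 1 θ ≤ a 1
        nlinarith [hp 0]
    | succ n ih =>
      obtain ⟨h1, h2⟩ := ih
      have hQn := hQθ n
      have hQn1 := hQθ (n+1)
      have hle : Q (n+1) θ ≤ a (n+1) := by
        have : Q n θ * Q (n+1) θ ≤ a n * Q (n+1) θ := by nlinarith
        have h3 : Q n θ * Q (n+1) θ ≤ a (n+1) * Q n θ := le_trans this h2
        nlinarith
      refine ⟨hle, ?_⟩
      have hid : p (n+1) * (a (n+2) * Q (n+1) θ - a (n+1) * Q (n+2) θ) =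
          2 * r (n+1) * a (n+1) * Q (n+1) θ + q (n+1) * (a (n+1) * Q n θ - a n * Q (n+1) θ) := by
        have e1 := hreca n
        have e2 := hrecθ n
        nlinarith [e1, e2, mul_comm (a (n+2)) (Q (n+1) θ)]
      have hpos : 0 ≤ 2 * r (n+1) * a (n+1) * Q (n+1) θ := by
        have hA : (0:ℝ) < a (n+1) := lt_of_lt_of_le hQn1 hle
        have := mul_nonneg (mul_nonneg (mul_nonneg (by norm_num : (0:ℝ) ≤ 2) (hr (n+1))) hA.le) hQn1.le
        linarith
      have hq1 := hq n
      nlinarith [hp (n+1)]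
  have haQ : ∀ n, 0 < a n := fun n => lt_of_lt_of_le (hQθ n) (key n).1
  have habs : ∀ n, |Q n θ / Q n (-θ)| = Q n θ / a n := by
    intro n
    have h1 : |Q n (-θ)| = a n := by
      have h2 : |a n| = a n := abs_of_pos (haQ n)
      have h3 : |a n| = |Q n (-θ)| := by
        show |(-1)^n * Q n (-θ)| = _
        rw [abs_mul, abs_pow, abs_neg, abs_one, one_pow, one_mul]
      rw [← h3, h2]
    rw [abs_div, abs_of_pos (hQθ n), h1]
  have hanti : Antitone (fun n : ℕ => |Q n θ / Q n (-θ)|) := by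
    apply antitone_nat_of_succ_le
    intro n
    simp only [habs]
    rw [div_le_div_iff₀ (haQ (n+1)) (haQ n)]
    have := (key n).2
    nlinarith
  have hone : ∀ n, |Q n θ / Q n (-θ)| ≤ 1 := by
    intro n
    rw [habs, div_le_one (haQ n)]
    exact (key n).1
  refine ⟨hanti, hone, ?_⟩
  -- find N with strict inequality
  have hstrict : ∃ N, |Q N θ / Q N (-θ)| < 1 := by
    obtain ⟨j, hj⟩ := haper
    rcases j with _ | m
    · refine ⟨1, ?_⟩
      rw [habs, div_lt_one (haQ 1)]
      have h1 := hQ1 θ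
      nlinarith [hp 0, ha1]
    · refine ⟨m + 2, ?_⟩
      rw [habs, div_lt_one (haQ (m+2))]
      have hid : p (m+1) * (a (m+2) * Q (m+1) θ - a (m+1) * Q (m+2) θ) =
          2 * r (m+1) * a (m+1) * Q (m+1) θ + q (m+1) * (a (m+1) * Q m θ - a m * Q (m+1) θ) := by
        have e1 := hreca m
        have e2 := hrecθ m
        linear_combination Q (m+1) θ * e1 - a (m+1) * e2
      have h2 := (key m).2
      have hc : 0 < a (m+2) * Q (m+1) θ - a (m+1) * Q (m+2) θ := by
        have hpc : 0 < p (m+1) * (a (m+2) * Q (m+1) θ - a (m+1) * Q (m+2) θ) := by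
          rw [hid]
          have t1 : 0 < 2 * r (m+1) * a (m+1) * Q (m+1) θ :=
            mul_pos (mul_pos (mul_pos two_pos hj) (haQ (m+1))) (hQθ (m+1))
          have t2 : 0 ≤ q (m+1) * (a (m+1) * Q m θ - a m * Q (m+1) θ) :=
            mul_nonneg (hq m).le (by linarith)
          linarith
        nlinarith [hp (m+1), hpc]
      have h3 : Q (m+2) θ * Q (m+1) θ ≤ a (m+2) * Q (m+1) θ - 
          (a (m+2) * Q (m+1) θ - a (m+1) * Q (m+2) θ) := by
        nlinarith [(key m).1, (key (m+1)).1, hQθ (m+2), hQθ (m+1), haQ (m+1)]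
      nlinarith [hQθ (m+1), hc]
  obtain ⟨N, hN⟩ := hstrict
  have hbdd : BddBelow (Set.range (fun n : ℕ => |Q n θ / Q n (-θ)|)) := by
    refine ⟨0, ?_⟩
    rintro x ⟨n, rfl⟩
    exact abs_nonneg _
  refine ⟨⨅ n, |Q n θ / Q n (-θ)|, tendsto_atTop_ciInf hanti hbdd, ?_⟩
  exact lt_of_le_of_lt (ciInf_le hbdd N) hN
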